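/- Let $v_1, v_2, v_3 \in \mathbb{Z}^3$ be a $\mathbb{Z}$-basis of $\mathbb{Z}^3$ and let $v_4 = v_1 + v_3 - v_2$. Let $\sigma = \mathbb{R}_{\geq 0}v_1 + \mathbb{R}_{\geq 0}v_2 + \mathbb{R}_{\geq 0}v_3 + \mathbb{R}_{\geq 0}v_4 \subseteq \mathbb{R}^3$, let $\tau = \mathbb{R}_{\geq 0}v_1 + \mathbb{R}_{\geq 0}v_3$ and let $W = \mathrm{span}_{\mathbb{R}}(v_2, v_4)$. Then $\tau \not\subseteq W$, but $W \cap \mathrm{relint}(\tau) \cap \mathbb{Z}^3 \neq \emptyset$; in fact $v_1 + v_3 = v_2 + v_4 \in W \cap \mathrm{relint}(\tau) \cap \mathbb{Z}^3$. -/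

import Mathlib

/-- Lattice computation underlying the strictly log canonical toric flip example:
the wall `τ` is not contained in `W`, yet `W` meets the relative interior of `τ`
in a lattice point, namely `v₁ + v₃ = v₂ + v₄`. -/
theorem stmt_13 (b : Module.Basis (Fin 3) ℤ (Fin 3 → ℤ))
    (v₁ v₂ v₃ v₄ : Fin 3 → ℤ)
    (h1 : v₁ = b 0) (h2 : v₂ = b 1) (h3 : v₃ = b 2)
    (h4 : v₄ = v₁ + v₃ - v₂)
    (ι : (Fin 3 → ℤ) → (Fin 3 → ℝ)) (hι : ∀ v i, ι v i = ((v i : ℤ) : ℝ)) :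
    ¬ ({x | ∃ a c : ℝ, 0 ≤ a ∧ 0 ≤ c ∧ x = a • ι v₁ + c • ι v₃} ⊆
        (Submodule.span ℝ {ι v₂, ι v₄} : Set (Fin 3 → ℝ))) ∧
    ι (v₁ + v₃) = ι (v₂ + v₄) ∧
    ι (v₁ + v₃) ∈ Submodule.span ℝ {ι v₂, ι v₄} ∧
    (∃ a c : ℝ, 0 < a ∧ 0 < c ∧ ι (v₁ + v₃) = a • ι v₁ + c • ι v₃) := by
  -- ι is additive in the needed instances
  have hadd : ∀ v w : Fin 3 → ℤ, ι (v + w) = ι v + ι w := by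
    intro v w; funext i; simp [hι]
  have h4' : ι v₄ = ι v₁ + ι v₃ - ι v₂ := by
    funext i; simp [hι, h4]
  -- linear independence of the casted basis vectors
  have e := Pi.basisFun ℤ (Fin 3)
  set M : Matrix (Fin 3) (Fin 3) ℤ := (Pi.basisFun ℤ (Fin 3)).toMatrix ⇑b with hM
  have hMinv : Invertible M := (Pi.basisFun ℤ (Fin 3)).invertibleToMatrix b
  have hMdet : IsUnit M.det := Matrix.isUnit_det_of_invertible M
  set A : Matrix (Fin 3) (Fin 3) ℝ := M.map (Int.cast : ℤ → ℝ) with hA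
  have hAdet : A.det ≠ 0 := by
    have hc : A.det = ((M.det : ℤ) : ℝ) := (RingHom.map_det (Int.castRingHom ℝ) M).symm
    rw [hc]
    exact_mod_cast hMdet.ne_zero
  have hAunit : IsUnit A := A.isUnit_iff_isUnit_det.mpr (isUnit_iff_ne_zero.mpr hAdet)
  have hcols : LinearIndependent ℝ (fun i ↦ A.transpose i) :=
    Matrix.linearIndependent_cols_iff_isUnit.mpr hAunit
  have hcol : ∀ k, A.transpose k = ι (b k) := by
    intro k; funext i
    simp [hA, hM, hι, Matrix.transpose_apply, Matrix.map_apply, Module.Basis.toMatrix_apply]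
  have hli : LinearIndependent ℝ (fun k ↦ ι (b k)) := by
    simpa [funext hcol] using hcols
  refine ⟨?_, ?_, ?_, ?_⟩
  · intro hsub
    have hmem : ι v₁ ∈ Submodule.span ℝ {ι v₂, ι v₄} := by
      apply hsub
      exact ⟨1, 0, zero_le_one, le_refl 0, by simp⟩
    rw [Submodule.mem_span_pair] at hmem
    obtain ⟨x, y, hxy⟩ := hmem
    rw [h4'] at hxy
    have hzero : (y - 1) • ι (b 0) + (x - y) • ι (b 1) + y • ι (b 2) = 0 := by
      have := hxy
      rw [h1, h2, h3] at this
      rw [← sub_eq_zero] at this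
      rw [← this]
      module
    have := Fintype.linearIndependent_iff.mp hli ![y - 1, x - y, y] (by
      rw [Fin.sum_univ_three]
      simpa using hzero)
    have h0 := this 0
    have h2' := this 2
    simp only [Matrix.cons_val_zero, Matrix.cons_val_two, Matrix.tail_cons,
      Matrix.cons_val_one, Matrix.head_cons, sub_eq_zero] at h0 h2'
    linarith
  · funext i; simp [hι, h4]
  · rw [hadd]
    have hm2 : ι v₂ ∈ Submodule.span ℝ {ι v₂, ι v₄} :=
      Submodule.subset_span (by simp)
    have hm4 : ι v₄ ∈ Submodule.span ℝ {ι v₂, ι v₄} :=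
      Submodule.subset_span (by simp)
    have hsum := Submodule.add_mem _ hm2 hm4
    have heq : ι v₂ + ι v₄ = ι v₁ + ι v₃ := by rw [h4']; ring
    rwa [heq] at hsum
  · exact ⟨1, 1, one_pos, one_pos, by rw [hadd]; simp⟩
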